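/- Let (a_m)_{m ≥ 0} be a sequence of real numbers satisfying the recursion a_{m+2} = ((m/2 − 1) a_m + (√2/2)(m+1) a_{m+1}) / ((m+2)(m+1)) for all integers m ≥ 1. If a_3 < 0 and a_4 < 0, then a_m < 0 for every integer m ≥ 3. -/
import Mathlib


/-- for a sequence satisfying the recursion
`a_{m+2} = ((m/2 - 1)aₘ + (√2/2)(m+1)a_{m+1}) / ((m+2)(m+1))` for `m ≥ 1`, negativity of
`a₃` and `a₄` forces `aₘ < 0` for all `m ≥ 3`. -/
theorem stmt19 (a : ℕ → ℝ)
    (hrec : ∀ m : ℕ, 1 ≤ m →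
      a (m + 2) = (((m : ℝ) / 2 - 1) * a m + (Real.sqrt 2 / 2) * ((m : ℝ) + 1) * a (m + 1)) /
        (((m : ℝ) + 2) * ((m : ℝ) + 1)))
    (h3 : a 3 < 0) (h4 : a 4 < 0) :
    ∀ m : ℕ, 3 ≤ m → a m < 0 := by
  have key : ∀ m : ℕ, 3 ≤ m → a m < 0 ∧ a (m + 1) < 0 := by
    intro m hm
    induction m, hm using Nat.le_induction with
    | base => exact ⟨h3, h4⟩
    | succ n hn ih =>
      refine ⟨ih.2, ?_⟩
      rw [hrec n (by omega)]
      apply div_neg_of_neg_of_pos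
      · have hc : (0 : ℝ) < (n : ℝ) / 2 - 1 := by
          have : (3 : ℝ) ≤ (n : ℝ) := by exact_mod_cast hn
          linarith
        have hs : (0 : ℝ) < Real.sqrt 2 / 2 * ((n : ℝ) + 1) := by
          have := Real.sqrt_pos.mpr (by norm_num : (0:ℝ) < 2)
          positivity
        have h1 := mul_neg_of_pos_of_neg hc ih.1
        have h2 := mul_neg_of_pos_of_neg hs ih.2
        linarith
      · positivity
  intro m hm
  exact (key m hm).1
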